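/- The cyclic group Z_3 is not a 3CI-group: there exist two isomorphic 3-Cayley graphs Γ = Cay(Z_3, S_{i,j}) with S_{i,i} = ∅ and S_{i,j} = {0} for i ≠ j, and Σ = Cay(Z_3, T_{i,j}) with T_{i,i} = {1,2} and T_{i,j} = ∅ for i ≠ j (both being disjoint unions of three 3-cycles), such that no element of the normalizer of R(Z_3) in Sym(V) maps Γ to Σ. -/

import Mathlib

/-- Right multiplication permutation `R(g) : x_i ↦ (xg)_i` on `V = Fin m × G`. -/
def Rperm (m : ℕ) {G : Type*} [Group G] (g : G) : Equiv.Perm (Fin m × G) where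
  toFun v := (v.1, v.2 * g)
  invFun v := (v.1, v.2 * g⁻¹)
  left_inv v := by simp
  right_inv v := by simp

/-- The subgroup `R(G) = {R(g) : g ∈ G}` of `Sym(V)`. -/
def RG (m : ℕ) (G : Type*) [Group G] : Subgroup (Equiv.Perm (Fin m × G)) where
  carrier := {σ | ∃ g : G, σ = Rperm m g}
  one_mem' := ⟨1, Equiv.ext fun v => by simp [Rperm]⟩
  mul_mem' := by
    rintro _ _ ⟨g, rfl⟩ ⟨h, rfl⟩
    exact ⟨h * g, Equiv.ext fun v => by simp [Rperm, mul_assoc]⟩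
  inv_mem' := by
    rintro _ ⟨g, rfl⟩
    exact ⟨g⁻¹, Equiv.ext fun v => by
      simp [Rperm, Equiv.Perm.inv_def]⟩

/-- The arc relation of the `m`-Cayley digraph `Cay(G, S_{i,j})`: there is an arc
from `x_i` to `(sx)_j` for each `s ∈ S_{i,j}`. -/
def arcRel (m : ℕ) {G : Type*} [Group G] (S : Fin m → Fin m → Set G)
    (u v : Fin m × G) : Prop :=
  v.2 * u.2⁻¹ ∈ S u.1 v.1

/-- Connection sets of `Γ`: `S_{i,i} = ∅` and `S_{i,j} = {0}` for `i ≠ j`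
(written multiplicatively). -/
def S18 : Fin 3 → Fin 3 → Set (Multiplicative (ZMod 3)) :=
  fun i j => if i = j then ∅ else {1}

/-- Connection sets of `Σ`: `T_{i,i} = {1, 2}` and `T_{i,j} = ∅` for `i ≠ j`
(written multiplicatively). -/
def T18 : Fin 3 → Fin 3 → Set (Multiplicative (ZMod 3)) :=
  fun i j => if i = j then
      {Multiplicative.ofAdd (1 : ZMod 3), Multiplicative.ofAdd (2 : ZMod 3)}
    else ∅

/-- `ℤ_3` is not a 3CI-group: the two 3-Cayley graphs
`Γ = Cay(ℤ_3, S18)` and `Σ = Cay(ℤ_3, T18)` (both disjoint unions of three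
3-cycles) are isomorphic, yet no element of the normalizer of `R(ℤ_3)` in
`Sym(V)` maps `Γ` to `Σ`. -/

abbrev M3 := Multiplicative (ZMod 3)

lemma mem_T_iff (d : M3) :
    d ∈ ({Multiplicative.ofAdd (1 : ZMod 3), Multiplicative.ofAdd (2 : ZMod 3)} : Set M3)
      ↔ d ≠ 1 := by
  simp only [Set.mem_insert_iff, Set.mem_singleton_iff]
  revert d; decide

lemma arcS_iff (u v : Fin 3 × M3) :
    arcRel 3 S18 u v ↔ (u.1 ≠ v.1 ∧ v.2 = u.2) := by
  unfold arcRel S18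
  by_cases h : u.1 = v.1
  · simp [h]
  · simp [h, mul_inv_eq_one]

lemma arcT_iff (u v : Fin 3 × M3) :
    arcRel 3 T18 u v ↔ (u.1 = v.1 ∧ v.2 ≠ u.2) := by
  unfold arcRel T18
  by_cases h : u.1 = v.1
  · rw [if_pos h, mem_T_iff, ne_eq, mul_inv_eq_one]
    simp [h]
  · simp [h]

def cEq : Fin 3 ≃ M3 := Equiv.cast rfl

def eSwap : Equiv.Perm (Fin 3 × M3) where
  toFun v := (cEq.symm v.2, cEq v.1)
  invFun v := (cEq.symm v.2, cEq v.1)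
  left_inv v := by simp
  right_inv v := by simp

theorem Z3_not_3CI :
    (∃ e : Equiv.Perm (Fin 3 × Multiplicative (ZMod 3)),
      ∀ u v, arcRel 3 S18 u v ↔ arcRel 3 T18 (e u) (e v)) ∧
    ¬ ∃ n ∈ Subgroup.normalizer (RG 3 (Multiplicative (ZMod 3)) : Set (Equiv.Perm (Fin 3 × Multiplicative (ZMod 3)))),
        ∀ u v, arcRel 3 S18 u v ↔ arcRel 3 T18 (n u) (n v) := by
  constructor
  · refine ⟨eSwap, fun u v => ?_⟩
    rw [arcS_iff, arcT_iff]
    show _ ↔ (cEq.symm u.2 = cEq.symm v.2 ∧ cEq v.1 ≠ cEq u.1)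
    rw [cEq.symm.apply_eq_iff_eq, cEq.apply_eq_iff_eq.ne]
    constructor
    · rintro ⟨h1, h2⟩; exact ⟨h2.symm, fun h => h1 h.symm⟩
    · rintro ⟨h1, h2⟩; exact ⟨fun h => h2 h.symm, h1.symm⟩
  · rintro ⟨n, hn, hiso⟩
    set g : M3 := Multiplicative.ofAdd (1 : ZMod 3) with hg
    obtain ⟨h, hh⟩ := (Subgroup.mem_normalizer_iff.mp hn (Rperm 3 g)).mp ⟨g, rfl⟩
    have key : ∀ v : Fin 3 × M3, n (v.1, v.2 * g) = ((n v).1, (n v).2 * h) := by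
      intro v
      have : (n * Rperm 3 g) v = (Rperm 3 h * n) v := by
        rw [show n * Rperm 3 g = Rperm 3 h * n by
          have := hh.symm
          calc n * Rperm 3 g = (n * Rperm 3 g * n⁻¹) * n := by group
            _ = Rperm 3 h * n := by rw [← hh]]
      simpa [Rperm, Equiv.Perm.mul_apply] using this
    have fib : ∀ (i : Fin 3) (x : M3), (n (i, x)).1 = (n (i, (1 : M3))).1 := by
      have step : ∀ (i : Fin 3) (x : M3), (n (i, x * g)).1 = (n (i, x)).1 := by
        intro i x; rw [key (i, x)]
      intro i x
      have hx : x = 1 ∨ x = 1 * g ∨ x = 1 * g * g := by revert x; decide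
      rcases hx with rfl | rfl | rfl
      · rfl
      · rw [step]
      · rw [step, step]
    have cross : ∀ (i : Fin 3) (x : M3), (n (i, x)).1 = (n ((0 : Fin 3), x)).1 := by
      intro i x
      by_cases hi : i = 0
      · rw [hi]
      · have harc : arcRel 3 S18 ((0 : Fin 3), x) (i, x) := by
          rw [arcS_iff]; exact ⟨fun h => hi h.symm, rfl⟩
        have := (arcT_iff _ _).mp ((hiso _ _).mp harc)
        exact this.1.symm
    have const : ∀ v : Fin 3 × M3, (n v).1 = (n ((0 : Fin 3), (1 : M3))).1 := by
      intro v
      calc (n v).1 = (n (v.1, v.2)).1 := rfl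
        _ = (n (v.1, (1 : M3))).1 := fib v.1 v.2
        _ = (n ((0 : Fin 3), (1 : M3))).1 := cross v.1 1
    have hinj : Function.Injective (fun v : Fin 3 × M3 => (n v).2) := by
      intro u v huv
      have : n u = n v := Prod.ext (by rw [const u, const v]) huv
      exact n.injective this
    have := Fintype.card_le_of_injective _ hinj
    simp [Fintype.card_prod] at this
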